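/- arXiv:1302.3281 — 9 statements merged into one kernel-verified Lean document; each statement's English description precedes it below -/
import Mathlib

section
/- Let p be an odd prime, F = F_{p^{2r}}, and g, h : F → F. Define f(x) = g(x) + g(x)^{p^r} + h(x) − h(x)^{p^r}. Then f is planar if and only if for all x ∈ F and nonzero a, b ∈ F, the condition Δ_{Δ_{g,a},b}(x) + (Δ_{Δ_{g,a},b}(x))^{p^r} = 0 implies Δ_{Δ_{h,a},b}(x) ∉ F_{p^r} (the subfield of order p^r). -/
def IsPlanar {F : Type*} [Field F] (f : F → F) : Prop :=
  ∀ a : F, a ≠ 0 → Function.Bijective fun x => f (x + a) - f x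

theorem planar_iff_general_construction
    {F : Type*} [Field F] [Fintype F] (p r : ℕ) (hp : p.Prime) (hodd : Odd p)
    (hr : 1 ≤ r) (hcard : Fintype.card F = p ^ (2 * r))
    (g h : F → F)
    (f : F → F) (hf : ∀ x, f x = g x + (g x) ^ p ^ r + h x - (h x) ^ p ^ r) :
    IsPlanar f ↔
      ∀ (x : F) (a b : F), a ≠ 0 → b ≠ 0 →
        ((g (x + a + b) - g (x + b) - g (x + a) + g x) +
            (g (x + a + b) - g (x + b) - g (x + a) + g x) ^ p ^ r = 0 →
          (h (x + a + b) - h (x + b) - h (x + a) + h x) ^ p ^ r ≠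
            h (x + a + b) - h (x + b) - h (x + a) + h x) := by
  haveI : Fact p.Prime := ⟨hp⟩
  have hpF : (p : F) = 0 := by
    have h0 : ((p ^ (2 * r) : ℕ) : F) = 0 := by
      rw [← hcard]; exact FiniteField.cast_card_eq_zero F
    push_cast at h0
    exact pow_eq_zero_iff (by omega) |>.mp h0
  haveI hchar : CharP F p := by
    have hdvd : ringChar F ∣ p := (CharP.cast_eq_zero_iff F (ringChar F) p).mp hpF
    have hprime : (ringChar F).Prime := CharP.char_is_prime F (ringChar F)
    have : ringChar F = p := ((Nat.prime_dvd_prime_iff_eq hprime hp).mp hdvd)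
    rw [← this]; exact ringChar.charP F
  set q := p ^ r with hq
  have hq0 : q ≠ 0 := pow_ne_zero r hp.ne_zero
  have hqq : ∀ x : F, (x ^ q) ^ q = x := by
    intro x
    rw [← pow_mul, hq, ← pow_add]
    have : r + r = 2 * r := by ring
    rw [this, ← hcard]
    exact FiniteField.pow_card x
  have hexp : ∀ A B C D : F, (A - B - C + D) ^ q = A ^ q - B ^ q - C ^ q + D ^ q := by
    intro A B C D
    rw [add_pow_char_pow, sub_pow_char_pow, sub_pow_char_pow]
  have h2 : (2 : F) ≠ 0 := by
    have hp2 : p ≠ 2 := by rintro rfl; simp [Nat.odd_iff] at hodd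
    intro hc
    have hc' : ((2 : ℕ) : F) = 0 := by exact_mod_cast hc
    have hd := (CharP.cast_eq_zero_iff F p 2).mp hc'
    rcases (Nat.prime_two.eq_one_or_self_of_dvd p hd) with h' | h'
    · exact hp.one_lt.ne' h'
    · exact hp2 h'
  -- key: for any G H : F, G + G^q + H - H^q = 0 ↔ (G + G^q = 0 ∧ H^q = H)
  have key : ∀ G H : F, G + G ^ q + H - H ^ q = 0 ↔ (G + G ^ q = 0 ∧ H ^ q = H) := by
    intro G H
    constructor
    · intro hGH
      have h1 : (G + G ^ q + H - H ^ q) ^ q = 0 := by rw [hGH, zero_pow hq0]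
      rw [sub_pow_char_pow, add_pow_char_pow, add_pow_char_pow, hqq, hqq] at h1
      have hsum : (2 : F) * (G + G ^ q) = 0 := by linear_combination hGH + h1
      have hG : G + G ^ q = 0 := by
        rcases mul_eq_zero.mp hsum with h' | h'
        · exact absurd h' h2
        · exact h'
      refine ⟨hG, ?_⟩
      have hH : H - H ^ q = 0 := by linear_combination hGH - hG
      exact (sub_eq_zero.mp hH).symm
    · rintro ⟨hG, hH⟩
      rw [hH]; linear_combination hG
  constructor
  · intro hpl x a b ha hb hG hH
    have hinj := (hpl a ha).injective
    have heq : f (x + b + a) - f (x + b) = f (x + a) - f x := by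
      rw [hf, hf, hf, hf]
      have hx : x + b + a = x + a + b := by ring
      rw [hx]
      have hkey := (key (g (x + a + b) - g (x + b) - g (x + a) + g x)
        (h (x + a + b) - h (x + b) - h (x + a) + h x)).mpr ⟨hG, hH⟩
      rw [hexp, hexp] at hkey
      linear_combination hkey
    have hxx : x + b = x := hinj heq
    exact hb (by linear_combination hxx)
  · intro hcond a ha
    have hinj : Function.Injective fun x => f (x + a) - f x := by
      intro x y hxy
      by_contra hne
      have hb : y - x ≠ 0 := sub_ne_zero.mpr (Ne.symm hne)
      simp only at hxy
      have hD : (g (x + a + (y - x)) - g (x + (y - x)) - g (x + a) + g x) +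
          (g (x + a + (y - x)) - g (x + (y - x)) - g (x + a) + g x) ^ q +
          (h (x + a + (y - x)) - h (x + (y - x)) - h (x + a) + h x) -
          (h (x + a + (y - x)) - h (x + (y - x)) - h (x + a) + h x) ^ q = 0 := by
        have hx1 : x + a + (y - x) = y + a := by ring
        have hx2 : x + (y - x) = y := by ring
        rw [hx1, hx2, hexp, hexp]
        rw [hf, hf, hf, hf] at hxy
        linear_combination - hxy
      rcases (key _ _).mp hD with ⟨hG, hH⟩
      exact hcond x a (y - x) ha hb hG hH
    exact ⟨hinj, Finite.surjective_of_injective hinj⟩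
end

section
/- Let f(x) = x^{p^i + p^k} over F = F_{p^n} with 0 ≤ i < k and p an odd prime. Then f is planar if and only if the equation z^{p^{k−i} − 1} = −1 has no solution z in F. -/
theorem monomial_planar_iff_no_solution
    {F : Type*} [Field F] [Fintype F] (p n i k : ℕ) (hp : p.Prime) (hodd : Odd p)
    (hik : i < k) (hkn : k < n) (hcard : Fintype.card F = p ^ n) :
    IsPlanar (fun x : F => x ^ (p ^ i + p ^ k)) ↔
      ¬ ∃ z : F, z ^ (p ^ (k - i) - 1) = -1 := by
  haveI : Fact p.Prime := ⟨hp⟩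
  haveI hchar : CharP F p := by
    haveI : CharP F (ringChar F) := ringChar.charP F
    obtain ⟨m, hq, hcard'⟩ := FiniteField.card F (ringChar F)
    have hdvd : p ∣ ringChar F ^ (m : ℕ) := by
      rw [← hcard', hcard]
      exact dvd_pow_self p (by omega)
    have hpq : p = ringChar F :=
      (Nat.prime_dvd_prime_iff_eq hp hq).mp (Nat.Prime.dvd_of_dvd_pow hp hdvd)
    rw [hpq]; infer_instance
  have hpk_pos : 0 < p ^ k := pow_pos hp.pos k
  have hpi_pos : 0 < p ^ i := pow_pos hp.pos i
  have hle : p ^ i ≤ p ^ k := Nat.pow_le_pow_right hp.pos hik.le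
  have hmul : p ^ i * (p ^ (k - i) - 1) = p ^ k - p ^ i := by
    rw [Nat.mul_sub, mul_one, ← pow_add]
    congr 2
    omega
  have hik' : p ^ i + (p ^ k - p ^ i) = p ^ k := by omega
  have hki : p ^ i * p ^ (k - i) = p ^ k := by rw [← pow_add]; congr 1; omega
  have hexp : ∀ a x : F, (x + a) ^ (p ^ i + p ^ k) - x ^ (p ^ i + p ^ k)
      = a ^ p ^ k * x ^ p ^ i + a ^ p ^ i * x ^ p ^ k + a ^ (p ^ i + p ^ k) := by
    intro a x
    rw [pow_add, pow_add, pow_add, add_pow_char_pow, add_pow_char_pow]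
    ring
  have hfrob : Function.Surjective fun x : F => x ^ p ^ i := by
    apply Finite.injective_iff_surjective.mp
    intro x y hxy
    have h1 : (x - y) ^ p ^ i = 0 := by
      rw [sub_pow_char_pow]; simpa using sub_eq_zero_of_eq hxy
    have h2 := pow_eq_zero_iff hpi_pos.ne' |>.mp h1
    exact sub_eq_zero.mp h2
  constructor
  · intro hplanar
    rintro ⟨z, hz⟩
    have h2 : 2 ≤ p ^ (k - i) := hp.two_le.trans (Nat.le_self_pow (by omega) p)
    have hz0 : z ≠ 0 := by
      intro h
      rw [h, zero_pow (by omega)] at hz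
      exact one_ne_zero (neg_eq_zero.mp hz.symm)
    obtain ⟨y, hy⟩ := hfrob z
    have hy' : y ^ p ^ i = z := hy
    have hy0 : y ≠ 0 := by
      intro h
      rw [h, zero_pow hpi_pos.ne'] at hy'
      exact hz0 hy'.symm
    have hyk : y ^ p ^ k = -z := by
      rw [← hki, pow_mul, hy']
      have h3 : p ^ (k - i) = (p ^ (k - i) - 1) + 1 := by omega
      rw [h3, pow_succ, hz]; ring
    have hbij := hplanar 1 one_ne_zero
    have h1 : y = 0 := by
      apply hbij.injective
      simp only [hexp]
      rw [hy', hyk, zero_pow hpi_pos.ne', zero_pow hpk_pos.ne']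
      ring
    exact hy0 h1
  · intro hno a ha
    rw [← Finite.injective_iff_bijective]
    intro x₁ x₂ hx
    by_contra hne
    simp only [hexp] at hx
    set d := x₁ - x₂ with hd
    have hd0 : d ≠ 0 := sub_ne_zero.mpr hne
    have key : a ^ p ^ k * d ^ p ^ i + a ^ p ^ i * d ^ p ^ k = 0 := by
      rw [hd, sub_pow_char_pow, sub_pow_char_pow]
      linear_combination hx
    have ht0 : a / d ≠ 0 := div_ne_zero ha hd0
    have key2 : (a / d) ^ p ^ k + (a / d) ^ p ^ i = 0 := by
      rw [div_pow, div_pow, div_add_div _ _ (pow_ne_zero _ hd0) (pow_ne_zero _ hd0),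
        div_eq_zero_iff]
      left
      linear_combination key
    apply hno
    refine ⟨(a / d) ^ p ^ i, ?_⟩
    rw [← pow_mul, hmul]
    have hsplit : (a / d) ^ p ^ k = (a / d) ^ p ^ i * (a / d) ^ (p ^ k - p ^ i) := by
      rw [← pow_add, hik']
    have hti : (a / d) ^ p ^ i ≠ 0 := pow_ne_zero _ ht0
    have hfin : (a / d) ^ p ^ i * (a / d) ^ (p ^ k - p ^ i) = (a / d) ^ p ^ i * (-1) := by
      rw [← hsplit]; linear_combination key2
    exact mul_left_cancel₀ hti hfin
end

section
/- Let f(x) = x^{p^i + p^k} over F = F_{p^n} with 0 ≤ i < k and p an odd prime. Then f is planar if and only if (p^n − 1)/gcd(p^n − 1, p^{k−i} − 1) is odd. -/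
theorem Units.neg_one_mem_iff_even_natCard {R : Type*} [CommRing R] [IsDomain R]
    (hR : ringChar R ≠ 2) (H : Subgroup Rˣ) [Finite H] :
    (-1 : Rˣ) ∈ H ↔ Even (Nat.card H) := by
  have hord {x : Rˣ} : orderOf x = 2 ↔ x = -1 := by
    rw [← orderOf_units, CharP.orderOf_eq_two_iff (ringChar R) hR, Units.ext_iff, Units.val_neg,
      Units.val_one]
  rw [even_iff_two_dvd]
  constructor
  · intro h
    exact hord.mpr rfl ▸ Subgroup.orderOf_dvd_natCard H h
  · intro h
    have := Fintype.ofFinite H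
    obtain ⟨y, hy⟩ := exists_prime_orderOf_dvd_card 2 (Nat.card_eq_fintype_card (α := H) ▸ h)
    rw [← Subgroup.orderOf_coe, hord] at hy
    exact hy ▸ y.2

theorem FiniteField.exists_pow_eq_neg_one_iff {F : Type*} [Field F] [Fintype F]
    (hF : ringChar F ≠ 2) (e : ℕ) :
    (∃ z : Fˣ, z ^ e = -1) ↔ Even ((Fintype.card F - 1) / (Fintype.card F - 1).gcd e) := by
  classical
  rw [← Fintype.card_units, ← Nat.card_eq_fintype_card, ← IsCyclic.card_powMonoidHom_range,
    ← Units.neg_one_mem_iff_even_natCard hF, MonoidHom.mem_range]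
  simp only [powMonoidHom_apply]

theorem isPlanar_pow_iff_bijective_add_one_pow_sub_pow {F : Type*} [Field F] (m : ℕ) :
    IsPlanar (fun x : F => x ^ m) ↔ Function.Bijective fun x : F => (x + 1) ^ m - x ^ m := by
  refine ⟨fun h => h 1 one_ne_zero, fun h a ha => ?_⟩
  have hconj : (fun x : F => (x + a) ^ m - x ^ m) =
      (a ^ m * ·) ∘ (fun x : F => (x + 1) ^ m - x ^ m) ∘ (a⁻¹ * ·) := by
    funext x
    simp only [Function.comp_apply, mul_sub, ← mul_pow, mul_add, mul_inv_cancel_left₀ ha, mul_one]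
  rw [hconj]
  exact (mulLeft_bijective₀ _ (pow_ne_zero m ha)).comp
    (h.comp (mulLeft_bijective₀ _ (inv_ne_zero ha)))

section ExpChar

variable {F : Type*} [Field F] (p : ℕ) [ExpChar F p]

theorem add_one_pow_sub_pow_expChar_pow_add_pow (i s : ℕ) (x : F) :
    (x + 1) ^ (p ^ i + p ^ (i + s)) - x ^ (p ^ i + p ^ (i + s)) = (x + x ^ p ^ s) ^ p ^ i + 1 := by
  simp only [pow_add p i s, mul_comm (p ^ i), pow_mul, pow_add, add_pow_expChar_pow, one_pow]
  ring

theorem injective_add_pow_expChar_pow_iff (s : ℕ) :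
    Function.Injective (fun x : F => x + x ^ p ^ s) ↔ ¬∃ z : Fˣ, z ^ (p ^ s - 1) = -1 := by
  let h : F →+ F := AddMonoidHom.id F + (iterateFrobenius F p s).toAddMonoidHom
  have hfac (x : F) : x + x ^ p ^ s = x * (1 + x ^ (p ^ s - 1)) := by
    rw [mul_add, mul_one, ← pow_succ', Nat.sub_add_cancel (Nat.one_le_pow _ _ (expChar_pos F p))]
  change Function.Injective h ↔ _
  rw [injective_iff_map_eq_zero]
  simp only [h, AddMonoidHom.add_apply, AddMonoidHom.id_apply, RingHom.toAddMonoidHom_eq_coe,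
    AddMonoidHom.coe_coe, iterateFrobenius_def, hfac]
  constructor
  · rintro hinj ⟨z, hz⟩
    refine z.ne_zero (hinj z ?_)
    rw [← Units.val_pow_eq_pow_val, hz, Units.val_neg, Units.val_one, add_neg_cancel, mul_zero]
  · intro hno x hx
    by_contra hx0
    refine hno ⟨Units.mk0 x hx0, Units.ext ?_⟩
    rw [Units.val_pow_eq_pow_val, Units.val_mk0, Units.val_neg, Units.val_one]
    linear_combination (mul_eq_zero.mp hx).resolve_left hx0

end ExpChar

theorem monomial_planar_iff_odd_index_general
    {F : Type*} [Field F] [Fintype F] (p n i k : ℕ) (hp : p.Prime) (hodd : Odd p)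
    (hik : i < k) (hcard : Fintype.card F = p ^ n) :
    IsPlanar (fun x : F => x ^ (p ^ i + p ^ k)) ↔
      Odd ((p ^ n - 1) / Nat.gcd (p ^ n - 1) (p ^ (k - i) - 1)) := by
  have : Fact p.Prime := ⟨hp⟩
  have : CharP F p := charP_of_card_eq_prime_pow hcard
  have hF : ringChar F ≠ 2 := by
    rw [ringChar.eq F p]
    rintro rfl
    exact absurd hodd (by decide)
  obtain ⟨s, rfl⟩ := Nat.exists_eq_add_of_le hik.le
  have hfrob : Function.Injective fun x : F => x ^ p ^ i := (iterateFrobenius F p i).injective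
  rw [isPlanar_pow_iff_bijective_add_one_pow_sub_pow,
    funext (add_one_pow_sub_pow_expChar_pow_add_pow p i s), ← Finite.injective_iff_bijective]
  change Function.Injective ((· + 1) ∘ (· ^ p ^ i) ∘ fun x : F => x + x ^ p ^ s) ↔ _
  rw [(add_left_injective 1).of_comp_iff, hfrob.of_comp_iff, injective_add_pow_expChar_pow_iff,
    FiniteField.exists_pow_eq_neg_one_iff hF, hcard, Nat.add_sub_cancel_left, Nat.not_even_iff_odd]

theorem monomial_planar_iff_odd_index
    {F : Type*} [Field F] [Fintype F] (p n i k : ℕ) (hp : p.Prime) (hodd : Odd p)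
    (hik : i < k) (hkn : k < n) (hcard : Fintype.card F = p ^ n) :
    IsPlanar (fun x : F => x ^ (p ^ i + p ^ k)) ↔
      Odd ((p ^ n - 1) / Nat.gcd (p ^ n - 1) (p ^ (k - i) - 1)) :=
  monomial_planar_iff_odd_index_general p n i k hp hodd hik hcard
end

section
/- Let f(x) = x^{p^i + p^k} over F = F_{p^n} with 0 ≤ i < k and p odd. Then f is planar if and only if for every b ∈ F^*, the multiplicative order of b^{p^k − p^i} is odd. -/
theorem monomial_planar_iff_odd_order
    {F : Type*} [Field F] [Fintype F] (p n i k : ℕ) (hp : p.Prime) (hodd : Odd p)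
    (hik : i < k) (hkn : k < n) (hcard : Fintype.card F = p ^ n) :
    IsPlanar (fun x : F => x ^ (p ^ i + p ^ k)) ↔
      ∀ b : F, b ≠ 0 → Odd (orderOf (b ^ (p ^ k - p ^ i))) := by
  haveI : Fact p.Prime := ⟨hp⟩
  have hp2 : p ≠ 2 := by rintro rfl; exact absurd hodd (by decide)
  -- characteristic p
  have hq := ringChar.charP F
  have hqprime : (ringChar F).Prime := CharP.char_is_prime F (ringChar F)
  have hdvd : ringChar F ∣ p ^ n := by
    rw [← hcard]
    exact (CharP.cast_eq_zero_iff F (ringChar F) _).mp (FiniteField.cast_card_eq_zero F)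
  have hqp : ringChar F = p :=
    (Nat.prime_dvd_prime_iff_eq hqprime hp).mp (hqprime.dvd_of_dvd_pow hdvd)
  haveI hcp : CharP F p := hqp ▸ hq
  set d := p ^ k - p ^ i with hdd
  have hple : p ^ i ≤ p ^ k := Nat.pow_le_pow_right hp.one_le hik.le
  have hdk : p ^ i + d = p ^ k := Nat.add_sub_cancel' hple
  have hpk0 : p ^ k ≠ 0 := (pow_pos hp.pos k).ne'
  have hpi0 : p ^ i ≠ 0 := (pow_pos hp.pos i).ne'
  have key : ∀ a z : F, a ^ p ^ i * z ^ p ^ k + a ^ p ^ k * z ^ p ^ i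
      = a ^ p ^ i * z ^ p ^ i * (z ^ d + a ^ d) := by
    intro a z; rw [← hdk, pow_add, pow_add]; ring
  have expand : ∀ a x : F, (x + a) ^ (p ^ i + p ^ k) - x ^ (p ^ i + p ^ k)
      = a ^ p ^ i * x ^ p ^ k + a ^ p ^ k * x ^ p ^ i + a ^ (p ^ i + p ^ k) := by
    intro a x
    rw [pow_add (x + a), add_pow_char_pow, add_pow_char_pow, pow_add x, pow_add a]
    ring
  constructor
  · intro hpl b hb
    by_contra hno
    have hbd : b ^ d ≠ 0 := pow_ne_zero _ hb
    have hfin : IsOfFinOrder (b ^ d) := by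
      refine isOfFinOrder_iff_pow_eq_one.mpr ⟨Fintype.card F - 1, ?_,
        FiniteField.pow_card_sub_one_eq_one _ hbd⟩
      have : 1 < Fintype.card F := Fintype.one_lt_card
      omega
    have hpos : 0 < orderOf (b ^ d) := hfin.orderOf_pos
    obtain ⟨t, ht⟩ := Nat.not_odd_iff_even.mp hno
    have ht0 : 0 < t := by omega
    set c := b ^ t with hcdef
    have hy2 : (c ^ d) ^ 2 = 1 := by
      calc (c ^ d) ^ 2 = b ^ (t * (d * 2)) := by rw [hcdef, ← pow_mul, ← pow_mul]
        _ = (b ^ d) ^ (t + t) := by rw [← pow_mul]; congr 1; ring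
        _ = 1 := by rw [← ht, pow_orderOf_eq_one]
    have hy1 : c ^ d ≠ 1 := by
      intro h
      have h2 : (b ^ d) ^ t = 1 := by
        rw [← pow_mul, mul_comm, pow_mul]; exact h
      have := Nat.le_of_dvd ht0 (orderOf_dvd_of_pow_eq_one h2)
      omega
    have hyneg : c ^ d = -1 := by
      rcases mul_eq_zero.mp (show (c ^ d - 1) * (c ^ d + 1) = 0 by linear_combination hy2) with
        h | h
      · exact absurd (sub_eq_zero.mp h) hy1
      · exact eq_neg_of_add_eq_zero_left h
    have hsum : c ^ p ^ k + c ^ p ^ i = 0 := by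
      have h := key 1 c
      simp only [one_pow, one_mul, mul_one] at h
      rw [h, hyneg]; ring
    have hc0 : c ≠ 0 := pow_ne_zero _ hb
    have : c = 0 := by
      apply (hpl 1 one_ne_zero).injective (a₁ := c) (a₂ := 0)
      show (c + 1) ^ (p ^ i + p ^ k) - c ^ (p ^ i + p ^ k)
          = (0 + 1) ^ (p ^ i + p ^ k) - (0 : F) ^ (p ^ i + p ^ k)
      rw [expand 1 c, expand 1 0]
      simp only [one_pow, one_mul, mul_one, zero_pow hpk0, zero_pow hpi0]
      linear_combination hsum
    exact hc0 this
  · intro hord a ha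
    have hno : ∀ c : F, c ≠ 0 → c ^ d ≠ -1 := by
      intro c hc hcd
      have h2 : orderOf ((c : F) ^ d) = 2 := by
        rw [hcd, orderOf_neg_one, hqp, if_neg hp2]
      have := hord c hc
      rw [h2] at this
      exact absurd this (by decide)
    rw [Finite.injective_iff_bijective.symm]
    intro x y hxy
    simp only at hxy
    rw [expand a x, expand a y] at hxy
    have hz : a ^ p ^ i * (x - y) ^ p ^ k + a ^ p ^ k * (x - y) ^ p ^ i = 0 := by
      rw [sub_pow_char_pow, sub_pow_char_pow]
      linear_combination hxy
    rw [key] at hz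
    by_contra hxyne
    have hzn : x - y ≠ 0 := sub_ne_zero.mpr hxyne
    have hfac : (x - y) ^ d + a ^ d = 0 := by
      rcases mul_eq_zero.mp hz with h | h
      · rcases mul_eq_zero.mp h with h' | h'
        · exact absurd h' (pow_ne_zero _ ha)
        · exact absurd h' (pow_ne_zero _ hzn)
      · exact h
    have : ((x - y) / a) ^ d = -1 := by
      rw [div_pow, eq_neg_of_add_eq_zero_left hfac, neg_div,
        div_self (pow_ne_zero _ ha)]
    exact hno _ (div_ne_zero hzn ha) this
end

section
/- Let F = F_{p^{2r}} with p an odd prime, and let G = {x ∈ F^* : x^{p^r−1} = ±1}, a subgroup of F^* containing F_{p^r}^* as a subgroup of index 2, so that |G| = 2(p^r − 1). Then there is no element ω ∈ F^* of odd multiplicative order with ω + ω^{−1} ∈ G \ F_{p^r}^*. -/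
/-- There is no element `ω` of odd multiplicative order in `F_{p^{2r}}^*` with
`ω + ω⁻¹ ∈ G \ F_{p^r}^*`, where `G = {x : x^{p^r-1} = ±1}`; membership in
`G \ F_{p^r}^*` is expressed by `(ω + ω⁻¹)^{p^r - 1} = -1`. -/
theorem no_odd_order_with_sum_outside_subfield
    {F : Type*} [Field F] [Fintype F] (p r : ℕ) (hp : p.Prime) (hodd : Odd p)
    (hr : 1 ≤ r) (hcard : Fintype.card F = p ^ (2 * r)) :
    ¬ ∃ ω : F, ω ≠ 0 ∧ Odd (orderOf ω) ∧ (ω + ω⁻¹) ^ (p ^ r - 1) = -1 := by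
  rintro ⟨ω, hω0, hωodd, hG⟩
  haveI : CharP F p := by
    obtain ⟨n, hc, hq⟩ := FiniteField.card F (ringChar F)
    have hp' : p = ringChar F := by
      have : p ∣ (ringChar F) ^ (n : ℕ) := by
        rw [← hq, hcard]; exact dvd_pow_self p (by positivity)
      exact ((Nat.prime_dvd_prime_iff_eq hp hc).mp (hp.dvd_of_dvd_pow this))
    rw [hp']; infer_instance
  haveI : Fact p.Prime := ⟨hp⟩
  set q := p ^ r with hq
  have hq1 : 2 ≤ q := Nat.one_lt_pow (by omega) hp.one_lt
  set s : F := ω + ω⁻¹ with hs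
  have hs0 : s ≠ 0 := by
    intro h
    rw [h, zero_pow (by omega)] at hG
    exact one_ne_zero (neg_eq_zero.mp hG.symm)
  have hsq : s ^ q = -s := by
    calc s ^ q = s ^ (q - 1) * s := by rw [← pow_succ]; congr 1; omega
    _ = -s := by rw [hG]; ring
  haveI : ExpChar F p := ExpChar.prime hp
  set f : F →+* F := iterateFrobenius F p r with hf
  have hfx : ∀ x : F, f x = x ^ q := fun x => rfl
  have key : ∀ x : F, x ^ q = x → (x ^ 2 - 2) ^ q = x ^ 2 - 2 := by
    intro x hx
    have : f (x ^ 2 - 2) = x ^ 2 - 2 := by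
      rw [map_sub, map_pow, map_ofNat, hfx, hx]
    rwa [hfx] at this
  have hωpow : ∀ k : ℕ, (ω ^ k + (ω ^ k)⁻¹) ^ 2 - 2 = ω ^ (2 * k) + (ω ^ (2 * k))⁻¹ := by
    intro k
    have h1 : ω ^ k ≠ 0 := pow_ne_zero _ hω0
    field_simp
    ring
  have fixed : ∀ m : ℕ, 1 ≤ m →
      (ω ^ (2 ^ m) + (ω ^ (2 ^ m))⁻¹) ^ q = ω ^ (2 ^ m) + (ω ^ (2 ^ m))⁻¹ := by
    intro m hm
    induction m with
    | zero => omega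
    | succ n ih =>
      rcases Nat.lt_or_ge 1 (n + 1) with h | h
      · have hn : 1 ≤ n := by omega
        have := key _ (ih hn)
        rw [hωpow (2 ^ n)] at this
        have h2 : 2 * 2 ^ n = 2 ^ (n + 1) := by ring
        rwa [h2] at this
      · -- n = 0, base case m = 1
        have hn0 : n = 0 := by omega
        subst hn0
        have hbase : (s ^ 2 - 2) ^ q = s ^ 2 - 2 := by
          have : f (s ^ 2 - 2) = s ^ 2 - 2 := by
            rw [map_sub, map_pow, map_ofNat, hfx, hsq]; ring
          rwa [hfx] at this
        have h1 : s ^ 2 - 2 = ω ^ 2 + (ω ^ 2)⁻¹ := by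
          have := hωpow 1
          rw [pow_one, mul_one] at this
          rw [hs, this]
        rw [h1] at hbase
        simpa using hbase
  -- choose m with ω^(2^m) = ω
  set N := orderOf ω with hN
  have hN0 : N ≠ 0 := by
    rintro h; rw [h] at hωodd; simp [Nat.odd_iff] at hωodd
  have hcop : Nat.Coprime 2 N := by
    rw [Nat.coprime_two_left]  -- maybe wrong name
    exact hωodd
  set m := N.totient with hm
  have hm1 : 1 ≤ m := Nat.totient_pos.mpr (Nat.pos_of_ne_zero hN0)
  have hmod : 2 ^ m ≡ 1 [MOD N] := Nat.ModEq.pow_totient hcop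
  have hdvd : N ∣ 2 ^ m - 1 := by
    have h1 : 1 ≤ 2 ^ m := Nat.one_le_two_pow
    have := (Nat.modEq_iff_dvd' h1).mp hmod.symm
    exact this
  have hωm : ω ^ (2 ^ m) = ω := by
    have h1 : ω ^ (2 ^ m - 1) = 1 := orderOf_dvd_iff_pow_eq_one.mp hdvd
    calc ω ^ (2 ^ m) = ω ^ (2 ^ m - 1) * ω := by
          rw [← pow_succ]; congr 1; have : 1 ≤ 2 ^ m := Nat.one_le_two_pow; omega
      _ = ω := by rw [h1, one_mul]
  have := fixed m hm1
  rw [hωm] at this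
  rw [← hs] at this
  rw [hsq] at this
  -- -s = s
  have h2s : (2 : F) * s = 0 := by linear_combination -this
  have h2 : (2 : F) ≠ 0 := by
    intro h20
    have hpd : p ∣ 2 := (CharP.cast_eq_zero_iff F p 2).mp (by exact_mod_cast h20)
    have hp2 : p = 2 := (Nat.prime_dvd_prime_iff_eq hp Nat.prime_two).mp hpd
    rw [hp2] at hodd
    simp [Nat.odd_iff] at hodd
  exact hs0 ((mul_eq_zero.mp h2s).resolve_left h2)
end

section
/- Let p be an odd prime, r ≥ 1, and suppose h(x) = x^{p^i + p^k} (with 0 ≤ i < k < 2r) is planar over F = F_{p^{2r}}. Then f₁(x) = x² + x^{2p^r} + x^{p^i+p^k} − x^{(p^i+p^k)p^r} is a planar function on F. -/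
theorem isPlanar_iff_of_sub_sub {F : Type*} [Field F] [Finite F] {f : F → F} (D : F → F → F)
    (hD : ∀ a x, f (x + a) - f x - f a = D a x) (hadd : ∀ a x y, D a (x + y) = D a x + D a y) :
    IsPlanar f ↔ ∀ a ≠ 0, ∀ x, D a x = 0 → x = 0 := by
  have hinj : ∀ a, Function.Injective (fun x => f (x + a) - f x) ↔ ∀ x, D a x = 0 → x = 0 := by
    intro a
    let L : F →+ F := AddMonoidHom.mk' (D a) (hadd a)
    have hL : (fun x => f (x + a) - f x) = (· + f a) ∘ L := by
      funext x
      simp [L, ← hD]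
    rw [hL, (add_left_injective (f a)).of_comp_iff, injective_iff_map_eq_zero]
    rfl
  simp only [IsPlanar, ← Finite.injective_iff_bijective, hinj]

section PowPolar

variable {R : Type*} [CommRing R]

/-- The polarization of `x ^ (m + n)` when `m` and `n` are powers of the characteristic. -/
def powPolar (m n : ℕ) (x y : R) : R := x ^ m * y ^ n + x ^ n * y ^ m

theorem map_powPolar {S : Type*} [CommRing S] (φ : R →+* S) (m n : ℕ) (x y : R) :
    φ (powPolar m n x y) = powPolar m n (φ x) (φ y) := by
  simp only [powPolar, map_add, map_mul, map_pow]

theorem powPolar_mul_powPolar {m n : ℕ} (hm : Odd m) (hn : Odd n) {a u A U : R}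
    (h : A * U = -(a * u)) :
    powPolar m n a A * powPolar m n A u = A ^ (m + n) * (powPolar m n a u - powPolar m n A U) := by
  have hpow : ∀ l, Odd l → A ^ l * U ^ l = -(a ^ l * u ^ l) := fun l hl => by
    rw [← mul_pow, ← mul_pow, h, hl.neg_pow]
  unfold powPolar
  linear_combination A ^ (2 * n) * hpow m hm + A ^ (2 * m) * hpow n hn

variable (p : ℕ) [ExpChar R p]

theorem powPolar_add_right (i k : ℕ) (a x y : R) :
    powPolar (p ^ i) (p ^ k) a (x + y) = powPolar (p ^ i) (p ^ k) a x + powPolar (p ^ i) (p ^ k) a y := by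
  simp only [powPolar, add_pow_expChar_pow]
  ring

theorem add_pow_sub_pow_sub_pow (i k : ℕ) (a x : R) :
    (x + a) ^ (p ^ i + p ^ k) - x ^ (p ^ i + p ^ k) - a ^ (p ^ i + p ^ k) =
      powPolar (p ^ i) (p ^ k) a x := by
  simp only [powPolar, pow_add, add_pow_expChar_pow]
  ring

end PowPolar

section Involution

variable {R : Type*} [CommRing R] [IsDomain R] (φ : R →+* R)

theorem map_eq_neg_and_map_eq_of_add_map_add_sub_map_eq_zero (hφ : Function.Involutive φ)
    (h2 : (2 : R) ≠ 0) {S T : R} (h : S + φ S + (T - φ T) = 0) : φ S = -S ∧ φ T = T := by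
  have hφh : φ S + S + (φ T - T) = 0 := by
    simpa only [map_add, map_sub, hφ _, map_zero] using congrArg φ h
  constructor
  · apply mul_left_cancel₀ h2
    linear_combination h + hφh
  · apply mul_left_cancel₀ h2
    linear_combination hφh - h

theorem eq_zero_of_powPolar_twist_eq_zero (hφ : Function.Involutive φ) (h2 : (2 : R) ≠ 0)
    {m n : ℕ} (hm : Odd m) (hn : Odd n) (hB : ∀ a : R, a ≠ 0 → ∀ x, powPolar m n a x = 0 → x = 0)
    {a u : R} (ha : a ≠ 0)
    (h : 2 * a * u + φ (2 * a * u) + (powPolar m n a u - φ (powPolar m n a u)) = 0) : u = 0 := by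
  obtain ⟨hS, hT⟩ := map_eq_neg_and_map_eq_of_add_map_add_sub_map_eq_zero φ hφ h2 h
  have hau : φ a * φ u = -(a * u) := by
    apply mul_left_cancel₀ h2
    rw [map_mul, map_mul, map_ofNat] at hS
    linear_combination hS
  have hφa : φ a ≠ 0 := (map_ne_zero_iff φ hφ.injective).2 ha
  have hprod : powPolar m n a (φ a) * powPolar m n (φ a) u = 0 := by
    rw [powPolar_mul_powPolar hm hn hau, ← map_powPolar, hT, sub_self, mul_zero]
  rcases mul_eq_zero.1 hprod with h₁ | h₁
  · exact absurd (hB a ha _ h₁) hφa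
  · exact hB _ hφa u h₁

end Involution

theorem iterateFrobenius_involutive {F : Type*} [Field F] [Fintype F] {p r : ℕ} [ExpChar F p]
    (hcard : Fintype.card F = p ^ (2 * r)) : Function.Involutive (iterateFrobenius F p r) :=
  fun x => by
    rw [iterateFrobenius_def, iterateFrobenius_def, ← pow_mul, ← pow_add, ← two_mul, ← hcard,
      FiniteField.pow_card]

theorem f1_planar_general
    {F : Type*} [Field F] [Fintype F] (p r i k : ℕ) (hp : p.Prime) (hodd : Odd p)
    (hcard : Fintype.card F = p ^ (2 * r))
    (hplanar : IsPlanar (fun x : F => x ^ (p ^ i + p ^ k))) :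
    IsPlanar (fun x : F =>
      x ^ 2 + x ^ (2 * p ^ r) + x ^ (p ^ i + p ^ k) - x ^ ((p ^ i + p ^ k) * p ^ r)) := by
  have : Fact p.Prime := ⟨hp⟩
  have : CharP F p := charP_of_card_eq_prime_pow hcard
  have h2 : (2 : F) ≠ 0 := Ring.two_ne_zero <| by
    rw [ringChar.eq F p]
    rintro rfl
    exact Nat.not_even_iff_odd.2 hodd even_two
  have hB := (isPlanar_iff_of_sub_sub _ (add_pow_sub_pow_sub_pow p i k)
    (powPolar_add_right p i k)).1 hplanar
  set φ := iterateFrobenius F p r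
  have hf : (fun x : F =>
      x ^ 2 + x ^ (2 * p ^ r) + x ^ (p ^ i + p ^ k) - x ^ ((p ^ i + p ^ k) * p ^ r)) =
      fun x => x ^ 2 + φ (x ^ 2) + (x ^ (p ^ i + p ^ k) - φ (x ^ (p ^ i + p ^ k))) := by
    funext x
    simp only [φ, iterateFrobenius_def, ← pow_mul]
    ring
  rw [hf, isPlanar_iff_of_sub_sub fun a x =>
    2 * a * x + φ (2 * a * x) + (powPolar (p ^ i) (p ^ k) a x - φ (powPolar (p ^ i) (p ^ k) a x))]
  · exact fun a ha u => eq_zero_of_powPolar_twist_eq_zero φ (iterateFrobenius_involutive hcard) h2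
      hodd.pow hodd.pow hB ha
  · intro a x
    rw [← add_pow_sub_pow_sub_pow p i k, show 2 * a * x = (x + a) ^ 2 - x ^ 2 - a ^ 2 by ring]
    simp only [map_sub]
    ring
  · intro a x y
    simp only [powPolar_add_right, mul_add, map_add]
    ring

theorem f1_planar
    {F : Type*} [Field F] [Fintype F] (p r i k : ℕ) (hp : p.Prime) (hodd : Odd p)
    (hr : 1 ≤ r) (hik : i < k) (hk : k < 2 * r)
    (hcard : Fintype.card F = p ^ (2 * r))
    (hplanar : IsPlanar (fun x : F => x ^ (p ^ i + p ^ k))) :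
    IsPlanar (fun x : F =>
      x ^ 2 + x ^ (2 * p ^ r) + x ^ (p ^ i + p ^ k) - x ^ ((p ^ i + p ^ k) * p ^ r)) :=
  f1_planar_general p r i k hp hodd hcard hplanar
end

section
/- Let p be an odd prime, r ≥ 1, and suppose h(x) = x^{p^i + p^k} (with 0 ≤ i < k < 2r) is planar over F = F_{p^{2r}}. Then f₂(x) = x^{p^i+p^k} + x^{(p^i+p^k)p^r} + x² − x^{2p^r} is a planar function on F. -/
theorem f2_planar
    {F : Type*} [Field F] [Fintype F] (p r i k : ℕ) (hp : p.Prime) (hodd : Odd p)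
    (hr : 1 ≤ r) (hik : i < k) (hk : k < 2 * r)
    (hcard : Fintype.card F = p ^ (2 * r))
    (hplanar : IsPlanar (fun x : F => x ^ (p ^ i + p ^ k))) :
    IsPlanar (fun x : F =>
      x ^ (p ^ i + p ^ k) + x ^ ((p ^ i + p ^ k) * p ^ r) + x ^ 2 - x ^ (2 * p ^ r)) := by
  haveI : Fact p.Prime := ⟨hp⟩
  haveI hcharp : CharP F p := by
    have h1 : (ringChar F).Prime := CharP.char_is_prime F (ringChar F)
    obtain ⟨n, hn⟩ := FiniteField.card F (ringChar F)
    have hdvd : ringChar F ∣ p ^ (2 * r) := by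
      rw [← hcard, hn.2]; exact dvd_pow_self _ n.pos.ne'
    have := (Nat.prime_dvd_prime_iff_eq h1 hp).mp (h1.dvd_of_dvd_pow hdvd)
    rw [← this]; exact ringChar.charP F
  have h2 : (2:F) ≠ 0 := by
    have hne2 : p ≠ 2 := by rintro rfl; simp [Nat.odd_iff] at hodd
    have : ((2 : ℕ) : F) ≠ 0 := by
      rw [Ne, CharP.cast_eq_zero_iff F p 2]
      intro hdvd
      exact hne2 ((Nat.prime_dvd_prime_iff_eq hp Nat.prime_two).mp hdvd)
    simpa using this
  have hq : ∀ x : F, (x ^ p ^ r) ^ p ^ r = x := by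
    intro x
    rw [← pow_mul, ← pow_add, ← two_mul, ← hcard]
    exact FiniteField.pow_card x
  -- consequence of planarity of the monomial
  have H0 : ∀ w : F, w ^ p ^ i + w ^ p ^ k = 0 → w = 0 := by
    intro w hw
    have h1 := (hplanar 1 one_ne_zero).injective
    have e : ∀ x : F, (x + 1) ^ (p ^ i + p ^ k) - x ^ (p ^ i + p ^ k)
        = x ^ p ^ i + x ^ p ^ k + 1 := by
      intro x
      rw [pow_add, pow_add, add_pow_char_pow, add_pow_char_pow, one_pow, one_pow]
      ring
    apply h1
    simp only [e, hw, zero_pow (pow_ne_zero i hp.ne_zero), zero_pow (pow_ne_zero k hp.ne_zero)]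
    norm_num
  -- core lemma
  have key : ∀ a z : F, a ≠ 0 → z ≠ 0 →
      a ^ p ^ i * z ^ p ^ k + a ^ p ^ k * z ^ p ^ i
        + (a ^ p ^ i * z ^ p ^ k + a ^ p ^ k * z ^ p ^ i) ^ p ^ r
        + 2 * (a * z) - 2 * ((a * z) ^ p ^ r) = 0 → False := by
    intro a z ha hz hE
    have h2p : (2:F) ^ p ^ r = 2 := by
      rw [show (2:F) = 1 + 1 by norm_num, add_pow_char_pow, one_pow]
    set B : F := a ^ p ^ i * z ^ p ^ k + a ^ p ^ k * z ^ p ^ i with hBdef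
    have hE2 : B ^ p ^ r + B + 2 * ((a*z) ^ p ^ r) - 2 * (a*z) = 0 := by
      have h3 := congrArg (fun t : F => t ^ p ^ r) hE
      simp only [zero_pow (pow_ne_zero r hp.ne_zero), sub_pow_char_pow, add_pow_char_pow,
        mul_pow, hq, h2p] at h3
      linear_combination h3
    have hB : B + B ^ p ^ r = 0 := by
      have : 2 * (B + B ^ p ^ r) = 0 := by linear_combination hE + hE2
      rcases mul_eq_zero.mp this with h | h
      · exact absurd h h2
      · exact h
    have hu : (a * z) ^ p ^ r = a * z := by
      have : 2 * ((a*z) ^ p ^ r - a * z) = 0 := by linear_combination hE2 - hB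
      rcases mul_eq_zero.mp this with h | h
      · exact absurd h h2
      · exact sub_eq_zero.mp h
    set ZI : F := z ^ p ^ i
    set ZK : F := z ^ p ^ k
    set WI : F := (z ^ p ^ r) ^ p ^ i with hWI
    set WK : F := (z ^ p ^ r) ^ p ^ k with hWK
    have hBe : a ^ p ^ i * ZK + a ^ p ^ k * ZI
        + (a ^ p ^ r) ^ p ^ i * WK + (a ^ p ^ r) ^ p ^ k * WI = 0 := by
      rw [hBdef, add_pow_char_pow, mul_pow, mul_pow] at hB
      linear_combination hB
    have hI : (a ^ p ^ r) ^ p ^ i * WI = a ^ p ^ i * ZI := by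
      have := congrArg (fun t : F => t ^ p ^ i) hu
      simpa only [mul_pow] using this
    have hK : (a ^ p ^ r) ^ p ^ k * WK = a ^ p ^ k * ZK := by
      have := congrArg (fun t : F => t ^ p ^ k) hu
      simpa only [mul_pow] using this
    have hPQ : (ZK * WI + ZI * WK) *
        ((a*z) ^ p ^ i * ZK * WK + (a*z) ^ p ^ k * ZI * WI) = 0 := by
      simp only [mul_pow]
      linear_combination (ZI * ZK * WI * WK) * hBe - (ZI * ZK * WK^2) * hI
        - (ZI * ZK * WI^2) * hK
    have hzI : ZI ≠ 0 := pow_ne_zero _ hz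
    have hzK : ZK ≠ 0 := pow_ne_zero _ hz
    have hzR : z ^ p ^ r ≠ 0 := pow_ne_zero _ hz
    have hWIne : WI ≠ 0 := pow_ne_zero _ hzR
    have hWKne : WK ≠ 0 := pow_ne_zero _ hzR
    rcases mul_eq_zero.mp hPQ with hP | hQ
    · have hw : z ^ p ^ r * z⁻¹ ≠ 0 := mul_ne_zero hzR (inv_ne_zero hz)
      apply hw
      apply H0
      rw [mul_pow, mul_pow, inv_pow, inv_pow]
      field_simp
      linear_combination hP
    · have huz : a * z ≠ 0 := mul_ne_zero ha hz
      have hw : z * z ^ p ^ r * (a*z)⁻¹ ≠ 0 :=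
        mul_ne_zero (mul_ne_zero hz hzR) (inv_ne_zero huz)
      apply hw
      apply H0
      rw [mul_pow, mul_pow, mul_pow, mul_pow, inv_pow, inv_pow]
      field_simp
      linear_combination hQ
  -- main argument
  intro a ha
  rw [Function.Bijective]
  have hinj : Function.Injective fun x : F =>
      (fun x : F => x ^ (p ^ i + p ^ k) + x ^ ((p ^ i + p ^ k) * p ^ r) + x ^ 2
        - x ^ (2 * p ^ r)) (x + a)
      - (fun x : F => x ^ (p ^ i + p ^ k) + x ^ ((p ^ i + p ^ k) * p ^ r) + x ^ 2
        - x ^ (2 * p ^ r)) x := by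
    intro x y hxy
    simp only at hxy
    by_contra hne
    have hz : x - y ≠ 0 := sub_ne_zero.mpr hne
    apply key a (x - y) ha hz
    have expand :
        a ^ p ^ i * (x - y) ^ p ^ k + a ^ p ^ k * (x - y) ^ p ^ i
          + (a ^ p ^ i * (x - y) ^ p ^ k + a ^ p ^ k * (x - y) ^ p ^ i) ^ p ^ r
          + 2 * (a * (x - y)) - 2 * ((a * (x - y)) ^ p ^ r)
        = (((x+a) ^ (p ^ i + p ^ k) + (x+a) ^ ((p ^ i + p ^ k) * p ^ r) + (x+a) ^ 2
              - (x+a) ^ (2 * p ^ r))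
            - (x ^ (p ^ i + p ^ k) + x ^ ((p ^ i + p ^ k) * p ^ r) + x ^ 2 - x ^ (2 * p ^ r)))
        - (((y+a) ^ (p ^ i + p ^ k) + (y+a) ^ ((p ^ i + p ^ k) * p ^ r) + (y+a) ^ 2
              - (y+a) ^ (2 * p ^ r))
            - (y ^ (p ^ i + p ^ k) + y ^ ((p ^ i + p ^ k) * p ^ r) + y ^ 2 - y ^ (2 * p ^ r))) := by
      rw [show 2 * p ^ r = p ^ r * 2 from mul_comm _ _]
      simp only [pow_mul, pow_add, mul_pow, add_pow_char_pow, sub_pow_char_pow]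
      ring
    rw [expand, hxy, sub_self]
  exact ⟨hinj, Finite.surjective_of_injective hinj⟩
end

section
/- Over F = F_{p^2} with p an odd prime, the monomial x^{p+1} is not planar. -/
theorem norm_monomial_not_planar
    {F : Type*} [Field F] [Fintype F] (p : ℕ) (hp : p.Prime) (hodd : Odd p)
    (hcard : Fintype.card F = p ^ 2) :
    ¬ IsPlanar (fun x : F => x ^ (p + 1)) := by
  -- First establish that F has characteristic p.
  haveI hq : CharP F (ringChar F) := ringChar.charP F
  have hqp : ringChar F = p := by
    obtain ⟨n, hqprime, hcard'⟩ := FiniteField.card F (ringChar F)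
    have hdvd : ringChar F ∣ p ^ 2 := by
      rw [hcard] at hcard'
      exact hcard' ▸ dvd_pow_self (ringChar F) n.2.ne'
    exact ((Nat.prime_dvd_prime_iff_eq hqprime hp).mp
      (hqprime.dvd_of_dvd_pow hdvd))
  haveI : CharP F p := hqp ▸ hq
  haveI : Fact p.Prime := ⟨hp⟩
  intro h
  have h1 : Function.Bijective fun x : F => (x + 1) ^ (p + 1) - x ^ (p + 1) := h 1 one_ne_zero
  -- The difference map is x ↦ x^p + x + 1.
  have key : ∀ x : F, (x + 1) ^ (p + 1) - x ^ (p + 1) = x ^ p + x + 1 := by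
    intro x
    have : (x + 1) ^ p = x ^ p + 1 := by
      simpa using add_pow_char x 1 p
    rw [pow_succ, pow_succ, this]
    ring
  have hinj : Function.Injective fun x : F => x ^ p + x := by
    intro a b hab
    have : (a + 1) ^ (p + 1) - a ^ (p + 1) = (b + 1) ^ (p + 1) - b ^ (p + 1) := by
      rw [key, key, show a ^ p + a = b ^ p + b from hab]
    exact h1.1 this
  -- Every value of x ↦ x^p + x is fixed by the Frobenius, so lies in a set of size ≤ p.
  have hroot : ∀ x : F, (x ^ p + x) ^ p = x ^ p + x := by
    intro x
    have hx : x ^ p ^ 2 = x := by rw [← hcard]; exact FiniteField.pow_card x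
    rw [add_pow_char, ← pow_mul, ← pow_two, hx]; ring
  -- Count: the image injects into the roots of X^p - X.
  classical
  set Q : Polynomial F := Polynomial.X ^ p - Polynomial.X with hQ
  have hQne : Q ≠ 0 := by
    intro h0
    have hc := congrArg (fun q : Polynomial F => q.coeff p) h0
    simp [hQ, Polynomial.coeff_X, hp.one_lt.ne] at hc
  have himg : ∀ x : F, (x ^ p + x) ∈ Q.roots.toFinset := by
    intro x
    rw [Multiset.mem_toFinset, Polynomial.mem_roots hQne]
    simp [hQ, hroot x, sub_eq_zero]
  have hle : Fintype.card F ≤ Q.roots.toFinset.card := by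
    have := Finset.card_le_card_of_injOn (s := Finset.univ) (fun x => x ^ p + x)
      (fun x _ => himg x) (fun a _ b _ hab => hinj hab)
    simpa using this
  have hle2 : Q.roots.toFinset.card ≤ p := by
    calc Q.roots.toFinset.card ≤ Multiset.card Q.roots := Q.roots.toFinset_card_le
    _ ≤ Q.natDegree := Q.card_roots'
    _ ≤ p := by
        rw [hQ]
        apply le_trans (Polynomial.natDegree_sub_le _ _)
        simp [Polynomial.natDegree_X_pow]
        exact hp.one_lt.le
  rw [hcard] at hle
  have : p ^ 2 ≤ p := hle.trans hle2
  nlinarith [hp.one_lt]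
end

section
/- The monomial x^{p^m + 1} is planar over F_{p^n} (p an odd prime) if n / gcd(n, m) is odd. -/
private lemma charP_of_card {F : Type*} [Field F] [Fintype F] (p n : ℕ) (hp : p.Prime)
    (hn : 1 ≤ n) (hcard : Fintype.card F = p ^ n) : CharP F p := by
  obtain ⟨c, hc⟩ := CharP.exists F
  haveI := hc
  have hcprime : c.Prime := CharP.char_is_prime F c
  obtain ⟨k, -, hk⟩ := FiniteField.card F c
  have hdvd : c ∣ p ^ n := by
    rw [← hcard, hk]
    exact dvd_pow_self c k.pos.ne'
  have hcp : c = p := (Nat.prime_dvd_prime_iff_eq hcprime hp).mp (hcprime.dvd_of_dvd_pow hdvd)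
  rwa [← hcp]

private lemma bezout_aux (n m : ℕ) (hn : 1 ≤ n) (hm : 1 ≤ m) :
    ∃ k l : ℕ, k * m = Nat.gcd n m + l * n := by
  have hB := Nat.gcd_eq_gcd_ab n m
  set A := Nat.gcdA n m with hA
  set B := Nat.gcdB n m with hBdef
  have hnpos : (0 : ℤ) < n := by exact_mod_cast hn
  have hmZ : (1 : ℤ) ≤ m := by exact_mod_cast hm
  set r : ℤ := B % n with hrdef
  have hr0 : 0 ≤ r := Int.emod_nonneg B hnpos.ne'
  have hBeq : B = n * (B / n) + r := (Int.mul_ediv_add_emod B n).symm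
  set K : ℤ := r + n with hKdef
  set L : ℤ := m - A - m * (B / n) with hLdef
  have hkey : K * m = (Nat.gcd n m : ℤ) + L * n := by
    rw [hB, hKdef, hLdef]
    linear_combination (-(m : ℤ)) * hBeq
  have hdn : (Nat.gcd n m : ℤ) ≤ (n : ℤ) := by
    exact_mod_cast Nat.le_of_dvd hn (Nat.gcd_dvd_left n m)
  have hKn : (n : ℤ) ≤ K := by rw [hKdef]; linarith
  have hLn : 0 ≤ L * n := by nlinarith [hkey]
  have hL0 : 0 ≤ L := by
    by_contra hL
    push_neg at hL
    have := mul_neg_of_neg_of_pos hL hnpos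
    linarith
  have hK0 : 0 ≤ K := by linarith
  refine ⟨K.toNat, L.toNat, ?_⟩
  have hcast : ((K.toNat * m : ℕ) : ℤ) = ((Nat.gcd n m + L.toNat * n : ℕ) : ℤ) := by
    push_cast [Int.toNat_of_nonneg hK0, Int.toNat_of_nonneg hL0]
    exact hkey
  exact_mod_cast hcast

private lemma iter_pow {F : Type*} [CommRing F] (p c k : ℕ) (hodd : Odd p) (z : F)
    (hz : z ^ p ^ c = (-1) ^ k * z) (j : ℕ) :
    z ^ p ^ (j * c) = (-1) ^ (j * k) * z := by
  induction j with
  | zero => simp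
  | succ j ih =>
    have hpc : Odd (p ^ c) := hodd.pow
    have h1 : z ^ p ^ ((j + 1) * c) = (z ^ p ^ (j * c)) ^ p ^ c := by
      rw [← pow_mul, ← pow_add, add_mul, one_mul]
    have hneg : ((-1 : F)) ^ (j * k * p ^ c) = (-1) ^ (j * k) := by
      rw [mul_comm (j * k) (p ^ c), pow_mul, hpc.neg_one_pow]
    rw [h1, ih, mul_pow, ← pow_mul, hz, hneg, ← mul_assoc, ← pow_add, add_mul, one_mul]

private lemma no_sol {F : Type*} [Field F] [Fintype F] (p n m : ℕ) (hp : p.Prime)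
    (hodd : Odd p) (hn : 1 ≤ n) (hcard : Fintype.card F = p ^ n)
    (h : Odd (n / Nat.gcd n m)) (z : F) (hz : z ≠ 0) : z ^ (p ^ m - 1) ≠ -1 := by
  haveI := charP_of_card p n hp hn hcard
  have hne : (-1 : F) ≠ 1 := by
    intro h1
    have h2 : ((2 : ℕ) : F) = 0 := by push_cast; linear_combination -h1
    have hpd := (CharP.cast_eq_zero_iff F p 2).mp h2
    have hp2 : p = 2 := (Nat.prime_dvd_prime_iff_eq hp Nat.prime_two).mp hpd
    rcases hodd with ⟨t, ht⟩
    omega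
  intro hsol
  rcases Nat.eq_zero_or_pos m with hm0 | hm
  · rw [hm0] at hsol
    simp at hsol
    exact hne hsol.symm
  · have hq1 : 1 ≤ p ^ m := Nat.one_le_pow _ _ hp.pos
    have hzm : z ^ p ^ m = (-1 : F) ^ 1 * z := by
      have h1 : z ^ p ^ m = z ^ (p ^ m - 1) * z := by
        rw [← pow_succ]
        congr 1
        omega
      rw [h1, hsol, pow_one]
    obtain ⟨k, l, hkl⟩ := bezout_aux n m hn hm
    have h1 := iter_pow p m 1 hodd z hzm k
    rw [mul_one] at h1
    have hln : z ^ p ^ (l * n) = z := by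
      have he : p ^ (l * n) = (p ^ n) ^ l := by rw [← pow_mul, mul_comm]
      rw [he, ← hcard]
      exact FiniteField.pow_card_pow l z
    have hd : z ^ p ^ (Nat.gcd n m) = (-1) ^ k * z := by
      rw [← h1, hkl, pow_add, mul_comm (p ^ Nat.gcd n m) (p ^ (l * n)), pow_mul, hln]
    have h2 := iter_pow p (Nat.gcd n m) k hodd z hd (n / Nat.gcd n m)
    rw [Nat.div_mul_cancel (Nat.gcd_dvd_left n m)] at h2
    have hzn : z ^ p ^ n = z := by rw [← hcard]; exact FiniteField.pow_card z
    rw [hzn] at h2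
    have hpow1 : ((-1 : F)) ^ (n / Nat.gcd n m * k) = 1 := by
      have hh : (-1 : F) ^ (n / Nat.gcd n m * k) * z = 1 * z := by
        rw [one_mul, ← h2]
      exact mul_right_cancel₀ hz hh
    have hkeven : Even k := by
      rcases Nat.even_or_odd k with he | ho
      · exact he
      · exfalso
        have hoo : Odd (n / Nat.gcd n m * k) := h.mul ho
        rw [hoo.neg_one_pow] at hpow1
        exact hne hpow1
    have hd1 : z ^ p ^ (Nat.gcd n m) = (-1 : F) ^ 0 * z := by
      rw [hd, hkeven.neg_one_pow, pow_zero]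
    have h3 := iter_pow p (Nat.gcd n m) 0 hodd z hd1 (m / Nat.gcd n m)
    rw [Nat.div_mul_cancel (Nat.gcd_dvd_right n m)] at h3
    simp only [mul_zero, pow_zero, one_mul] at h3
    rw [hzm] at h3
    have hfin : (-1 : F) * z = 1 * z := by
      rw [one_mul]
      simpa using h3
    exact hne (mul_right_cancel₀ hz hfin)

theorem monomial_planar_of_odd_quotient
    {F : Type*} [Field F] [Fintype F] (p n m : ℕ) (hp : p.Prime) (hodd : Odd p)
    (hn : 1 ≤ n) (hcard : Fintype.card F = p ^ n)
    (h : Odd (n / Nat.gcd n m)) :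
    IsPlanar (fun x : F => x ^ (p ^ m + 1)) := by
  haveI := charP_of_card p n hp hn hcard
  haveI : Fact p.Prime := ⟨hp⟩
  intro a ha
  have hinj : Function.Injective (fun x : F => (x + a) ^ (p ^ m + 1) - x ^ (p ^ m + 1)) := by
    intro x y hxy
    simp only at hxy
    have hexp : ∀ t : F, (t + a) ^ (p ^ m + 1) - t ^ (p ^ m + 1)
        = a * t ^ p ^ m + a ^ p ^ m * t + a ^ (p ^ m + 1) := by
      intro t
      have hfrob : (t + a) ^ p ^ m = t ^ p ^ m + a ^ p ^ m := add_pow_char_pow ..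
      calc (t + a) ^ (p ^ m + 1) - t ^ (p ^ m + 1)
          = (t + a) ^ p ^ m * (t + a) - t ^ p ^ m * t := by rw [pow_succ, pow_succ]
        _ = _ := by rw [hfrob]; ring
    rw [hexp x, hexp y] at hxy
    by_contra hne
    have hu : x - y ≠ 0 := sub_ne_zero.mpr hne
    have hkey : a * (x - y) ^ p ^ m + a ^ p ^ m * (x - y) = 0 := by
      have hsub : (x - y) ^ p ^ m = x ^ p ^ m - y ^ p ^ m := sub_pow_char_pow ..
      rw [hsub]
      linear_combination hxy
    set z := (x - y) / a with hzdef
    have hzne : z ≠ 0 := div_ne_zero hu ha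
    apply no_sol p n m hp hodd hn hcard h z hzne
    have hq1 : 1 ≤ p ^ m := Nat.one_le_pow _ _ hp.pos
    have hmain : (x - y) ^ p ^ m * a = -(x - y) * a ^ p ^ m := by linear_combination hkey
    have hz1 : z ^ p ^ m = -z := by
      rw [hzdef, div_pow, ← neg_div, div_eq_div_iff (pow_ne_zero _ ha) ha]
      exact hmain
    have hstep : z ^ (p ^ m - 1) * z = -1 * z := by
      rw [← pow_succ]
      have he : p ^ m - 1 + 1 = p ^ m := by omega
      rw [he, hz1]
      ring
    exact mul_right_cancel₀ hzne hstep
  exact Finite.injective_iff_bijective.mp hinj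
end
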